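/- Let F be twice continuously differentiable with M-Lipschitz Hessian, μI ⪯ ∇²F ⪯ LI, minimizer w*. Let H be symmetric with μ_β I ⪯ H ⪯ L_β I, and let p satisfy ‖Hp + ∇F(w)‖ ≤ ζ‖∇F(w)‖. Then the step w⁺ = w + p satisfies ‖w⁺ − w*‖ ≤ (M/(2μ_β))‖w−w*‖² + (1/μ_β)‖(H − ∇²F(w))(w−w*)‖ + (ζL/μ_β)‖w−w*‖. -/

import Mathlib

set_option maxHeartbeats 1000000


open scoped RealInnerProductSpace

/-- A symmetric continuous linear map whose quadratic form is bounded by `r‖u‖²` in absolute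
value has `‖T u‖ ≤ r ‖u‖`. -/
lemma aux_selfadj_norm_bound {E : Type*} [NormedAddCommGroup E] [InnerProductSpace ℝ E]
    (T : E →L[ℝ] E) (hsym : ∀ u v, ⟪T u, v⟫ = ⟪u, T v⟫) {r : ℝ} (hr : 0 ≤ r)
    (hb : ∀ u, |⟪T u, u⟫| ≤ r * ‖u‖ ^ 2) (u : E) : ‖T u‖ ≤ r * ‖u‖ := by
  rcases eq_or_ne (T u) 0 with h | h
  · rw [h, norm_zero]; positivity
  have hTu : 0 < ‖T u‖ := norm_pos_iff.2 h
  have hu : u ≠ 0 := by rintro rfl; simp at h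
  have hun : 0 < ‖u‖ := norm_pos_iff.2 hu
  set v := (‖u‖ / ‖T u‖) • T u with hv
  have hvn : ‖v‖ = ‖u‖ := by
    rw [hv, norm_smul, Real.norm_eq_abs, abs_of_pos (div_pos hun hTu)]
    field_simp
  have hiv : ⟪T u, v⟫ = ‖u‖ * ‖T u‖ := by
    rw [hv, real_inner_smul_right, real_inner_self_eq_norm_sq]
    field_simp
  have hTvu : ⟪T v, u⟫ = ⟪T u, v⟫ := by rw [hsym v u, real_inner_comm]
  have e1 : ⟪T (u + v), u + v⟫ = ⟪T u, u⟫ + 2 * ⟪T u, v⟫ + ⟪T v, v⟫ := by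
    rw [map_add, inner_add_left, inner_add_right, inner_add_right, hTvu]; ring
  have e2 : ⟪T (u - v), u - v⟫ = ⟪T u, u⟫ - 2 * ⟪T u, v⟫ + ⟪T v, v⟫ := by
    rw [map_sub, inner_sub_left, inner_sub_right, inner_sub_right, hTvu]; ring
  have hb1 := abs_le.1 (hb (u + v))
  have hb2 := abs_le.1 (hb (u - v))
  have hpar : ‖u + v‖ ^ 2 + ‖u - v‖ ^ 2 = 2 * (‖u‖ ^ 2 + ‖v‖ ^ 2) := by
    rw [norm_add_sq_real, norm_sub_sq_real]; ring
  have hvn2 : ‖v‖ ^ 2 = ‖u‖ ^ 2 := by rw [hvn]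
  have s1 : 4 * (‖u‖ * ‖T u‖) ≤ r * ‖u + v‖ ^ 2 + r * ‖u - v‖ ^ 2 := by
    linarith [hb1.2, hb2.1, e1, e2, hiv]
  have s2 : r * ‖u + v‖ ^ 2 + r * ‖u - v‖ ^ 2 = 4 * (r * ‖u‖ ^ 2) := by
    have : r * ‖u + v‖ ^ 2 + r * ‖u - v‖ ^ 2 = r * (‖u + v‖ ^ 2 + ‖u - v‖ ^ 2) := by ring
    rw [this, hpar, hvn2]; ring
  nlinarith [s1, s2, hun, mul_pos hun hun]

/-- Second-order Taylor bound for a map with Lipschitz derivative. -/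
lemma aux_taylor_bound {E : Type*} [NormedAddCommGroup E] [NormedSpace ℝ E]
    (G : E → E) (A : E → (E →L[ℝ] E)) (M : ℝ)
    (hG : ∀ x, HasFDerivAt G (A x) x)
    (hLip : ∀ x y, ‖A x - A y‖ ≤ M * ‖x - y‖) (a b : E) :
    ‖G b - G a - A a (b - a)‖ ≤ M / 2 * ‖b - a‖ ^ 2 := by
  set u := b - a with hu
  set f : ℝ → E := fun t => G (a + t • u) - t • (A a u) - G a with hf
  have hline : ∀ t : ℝ, HasDerivAt (fun s : ℝ => a + s • u) u t := by
    intro t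
    simpa using ((hasDerivAt_id t).smul_const u).const_add a
  have hf' : ∀ t : ℝ, HasDerivAt f (A (a + t • u) u - A a u) t := by
    intro t
    have h1 : HasDerivAt (fun s : ℝ => G (a + s • u)) (A (a + t • u) u) t := by
      exact (hG (a + t • u)).comp_hasDerivAt t (hline t)
    have h2 : HasDerivAt (fun s : ℝ => s • (A a u)) (A a u) t := by
      simpa using (hasDerivAt_id t).smul_const (A a u)
    exact (h1.sub h2).sub_const (G a)
  have hcont : ContinuousOn f (Set.Icc (0:ℝ) 1) :=
    fun x _ => (hf' x).continuousAt.continuousWithinAt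
  have hder : ∀ x ∈ Set.Ico (0:ℝ) 1,
      HasDerivWithinAt f (A (a + x • u) u - A a u) (Set.Ici x) x :=
    fun x _ => (hf' x).hasDerivWithinAt
  have h0 : ‖f 0‖ ≤ M / 2 * ‖u‖ ^ 2 * (0:ℝ) ^ 2 := by simp [hf]
  have hB : ∀ x : ℝ, HasDerivAt (fun t : ℝ => M / 2 * ‖u‖ ^ 2 * t ^ 2) (M * ‖u‖ ^ 2 * x) x := by
    intro x
    have h := (hasDerivAt_pow 2 x).const_mul (M / 2 * ‖u‖ ^ 2)
    refine h.congr_deriv ?_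
    push_cast; ring
  have hbound : ∀ x ∈ Set.Ico (0:ℝ) 1, ‖A (a + x • u) u - A a u‖ ≤ M * ‖u‖ ^ 2 * x := by
    intro x hx
    have h1 : A (a + x • u) u - A a u = (A (a + x • u) - A a) u := by
      simp [ContinuousLinearMap.sub_apply]
    rw [h1]
    calc ‖(A (a + x • u) - A a) u‖ ≤ ‖A (a + x • u) - A a‖ * ‖u‖ :=
          ContinuousLinearMap.le_opNorm _ _
      _ ≤ M * ‖(a + x • u) - a‖ * ‖u‖ := by
          gcongr
          exact hLip _ _
      _ = M * ‖u‖ ^ 2 * x := by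
          have he : (a + x • u) - a = x • u := by abel
          rw [he, norm_smul, Real.norm_eq_abs, abs_of_nonneg hx.1]
          ring
  have key : ∀ x ∈ Set.Icc (0:ℝ) 1, ‖f x‖ ≤ M / 2 * ‖u‖ ^ 2 * x ^ 2 :=
    image_norm_le_of_norm_deriv_right_le_deriv_boundary hcont hder h0 hB hbound
  have h1 := key 1 (by norm_num)
  have hb' : a + (1:ℝ) • u = b := by rw [one_smul, hu]; abel
  have hf1 : f 1 = G b - G a - A a u := by
    show G (a + (1:ℝ) • u) - (1:ℝ) • (A a u) - G a = _
    rw [hb', one_smul]; abel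
  rw [hf1] at h1
  simpa using h1

theorem stmt_16 {d : ℕ} (F : EuclideanSpace ℝ (Fin d) → ℝ)
    (M μ L μβ Lβ ζ : ℝ) (hM : 0 < M) (hμ : 0 < μ) (hμL : μ ≤ L)
    (hμβ : 0 < μβ) (hβ : μβ ≤ Lβ) (hζ : ζ ∈ Set.Ioo (0 : ℝ) 1)
    (hF : ContDiff ℝ 2 F)
    (hLip : ∀ w z, ‖fderiv ℝ (gradient F) w - fderiv ℝ (gradient F) z‖ ≤ M * ‖w - z‖)
    (hHess : ∀ w v, μ * ‖v‖ ^ 2 ≤ ⟪fderiv ℝ (gradient F) w v, v⟫ ∧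
      ⟪fderiv ℝ (gradient F) w v, v⟫ ≤ L * ‖v‖ ^ 2)
    (wstar : EuclideanSpace ℝ (Fin d)) (hmin : ∀ z, F wstar ≤ F z)
    (H : EuclideanSpace ℝ (Fin d) →L[ℝ] EuclideanSpace ℝ (Fin d))
    (hsym : ∀ u v, ⟪H u, v⟫ = ⟪u, H v⟫)
    (hHb : ∀ v, μβ * ‖v‖ ^ 2 ≤ ⟪H v, v⟫ ∧ ⟪H v, v⟫ ≤ Lβ * ‖v‖ ^ 2)
    (w p wplus : EuclideanSpace ℝ (Fin d))
    (hres : ‖H p + gradient F w‖ ≤ ζ * ‖gradient F w‖)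
    (hstep : wplus = w + p) :
    ‖wplus - wstar‖ ≤ M / (2 * μβ) * ‖w - wstar‖ ^ 2
      + 1 / μβ * ‖H (w - wstar) - fderiv ℝ (gradient F) w (w - wstar)‖
      + ζ * L / μβ * ‖w - wstar‖ := by
  set A : EuclideanSpace ℝ (Fin d) → (EuclideanSpace ℝ (Fin d) →L[ℝ] EuclideanSpace ℝ (Fin d)) :=
    fun x => fderiv ℝ (gradient F) x with hA
  have hgrad_eq : gradient F
      = ⇑(InnerProductSpace.toDual ℝ (EuclideanSpace ℝ (Fin d))).symm ∘ (fderiv ℝ F) := funext fun x => rfl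
  have h1 : ContDiff ℝ 1 (fderiv ℝ F) := hF.fderiv_right (by norm_num)
  have hG1 : ContDiff ℝ 1 (gradient F) := by
    rw [hgrad_eq]
    exact ((InnerProductSpace.toDual ℝ (EuclideanSpace ℝ (Fin d))).symm.contDiff).comp h1
  have hGdiff : ∀ x, HasFDerivAt (gradient F) (A x) x := fun x =>
    ((hG1.differentiable (by norm_num)) x).hasFDerivAt
  -- symmetry of the Hessian
  have hAapp : ∀ x u : EuclideanSpace ℝ (Fin d), A x u =
      (InnerProductSpace.toDual ℝ (EuclideanSpace ℝ (Fin d))).symm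
        (fderiv ℝ (fderiv ℝ F) x u) := by
    intro x u
    show fderiv ℝ (gradient F) x u = _
    conv_lhs => rw [hgrad_eq]
    rw [(InnerProductSpace.toDual ℝ (EuclideanSpace ℝ (Fin d))).symm.comp_fderiv]
    simp
  have hf'at : ∀ y, HasFDerivAt F (fderiv ℝ F y) y := fun y =>
    ((hF.differentiable (by norm_num)) y).hasFDerivAt
  have hf''at : ∀ x, HasFDerivAt (fderiv ℝ F) (fderiv ℝ (fderiv ℝ F) x) x := fun x =>
    ((h1.differentiable (by norm_num)) x).hasFDerivAt
  have hAsym : ∀ x u v : EuclideanSpace ℝ (Fin d), ⟪A x u, v⟫ = ⟪u, A x v⟫ := by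
    intro x u v
    have key : ∀ a b : EuclideanSpace ℝ (Fin d), ⟪A x a, b⟫ = fderiv ℝ (fderiv ℝ F) x a b := by
      intro a b
      rw [hAapp x a]
      exact InnerProductSpace.toDual_symm_apply
    rw [key u v, real_inner_comm, key v u]
    exact second_derivative_symmetric hf'at (hf''at x) u v
  -- operator norm bound on the Hessian
  have hAL : ∀ (x v : EuclideanSpace ℝ (Fin d)), ‖A x v‖ ≤ L * ‖v‖ := by
    intro x v
    set c : ℝ := (L + μ) / 2 with hc
    set T : EuclideanSpace ℝ (Fin d) →L[ℝ] EuclideanSpace ℝ (Fin d) :=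
      A x - c • ContinuousLinearMap.id ℝ (EuclideanSpace ℝ (Fin d)) with hT
    have hTapp : ∀ z : EuclideanSpace ℝ (Fin d), T z = A x z - c • z := fun z => rfl
    have hTsym : ∀ u v : EuclideanSpace ℝ (Fin d), ⟪T u, v⟫ = ⟪u, T v⟫ := by
      intro u v
      rw [hTapp, hTapp, inner_sub_left, inner_sub_right, hAsym x u v,
        real_inner_smul_left, real_inner_smul_right]
    have hTb : ∀ z : EuclideanSpace ℝ (Fin d), |⟪T z, z⟫| ≤ (L - μ) / 2 * ‖z‖ ^ 2 := by
      intro z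
      have h := hHess x z
      have heq : ⟪T z, z⟫ = ⟪A x z, z⟫ - c * ‖z‖ ^ 2 := by
        rw [hTapp, inner_sub_left, real_inner_smul_left, real_inner_self_eq_norm_sq]
      rw [heq, abs_le]
      constructor
      · nlinarith [h.1, hc]
      · nlinarith [h.2, hc]
    have hbT := aux_selfadj_norm_bound T hTsym (by linarith) hTb v
    have hAv : A x v = T v + c • v := by rw [hTapp]; abel
    calc ‖A x v‖ = ‖T v + c • v‖ := by rw [hAv]
      _ ≤ ‖T v‖ + ‖c • v‖ := norm_add_le _ _
      _ ≤ (L - μ) / 2 * ‖v‖ + c * ‖v‖ := by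
          gcongr
          rw [norm_smul, Real.norm_eq_abs, abs_of_nonneg (by rw [hc]; linarith)]
      _ = L * ‖v‖ := by rw [hc]; ring
  -- gradient vanishes at the minimizer
  have hgw0 : gradient F wstar = 0 := by
    have hloc : IsLocalMin F wstar := Filter.Eventually.of_forall fun z => hmin z
    have h0 : fderiv ℝ F wstar = 0 := hloc.fderiv_eq_zero
    rw [hgrad_eq]
    simp [h0]
  -- Lipschitz bound on the gradient
  have hGL : ‖gradient F w‖ ≤ L * ‖w - wstar‖ := by
    have hL0 : (0:ℝ) ≤ L := le_of_lt (lt_of_lt_of_le hμ hμL)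
    have := Convex.norm_image_sub_le_of_norm_fderiv_le
      (f := gradient F) (s := Set.univ) (C := L) (x := wstar) (y := w)
      (fun x _ => (hG1.differentiable (by norm_num) x))
      (fun x _ => ContinuousLinearMap.opNorm_le_bound _ hL0 (fun v => hAL x v))
      convex_univ (Set.mem_univ _) (Set.mem_univ _)
    rwa [hgw0, sub_zero] at this
  -- Taylor bound
  have hTay : ‖A w (w - wstar) - gradient F w‖ ≤ M / 2 * ‖w - wstar‖ ^ 2 := by
    have h := aux_taylor_bound (gradient F) A M hGdiff (fun x y => hLip x y) w wstar
    rw [hgw0] at h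
    have heq : (0 : EuclideanSpace ℝ (Fin d)) - gradient F w - A w (wstar - w) = A w (w - wstar) - gradient F w := by
      rw [show wstar - w = -(w - wstar) by abel, map_neg]
      abel
    rw [heq, norm_sub_rev wstar w] at h
    exact h
  -- assemble
  have hv : wplus - wstar = p + (w - wstar) := by rw [hstep]; abel
  have hHv : H (wplus - wstar) = (H p + gradient F w) +
      (H (w - wstar) - A w (w - wstar)) + (A w (w - wstar) - gradient F w) := by
    rw [hv, map_add]; abel
  have hnorm : ‖H (wplus - wstar)‖ ≤ ζ * ‖gradient F w‖
      + ‖H (w - wstar) - A w (w - wstar)‖ + ‖A w (w - wstar) - gradient F w‖ := by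
    rw [hHv]
    exact le_trans (norm_add₃_le) (add_le_add (add_le_add hres le_rfl) le_rfl)
  have hlow : μβ * ‖wplus - wstar‖ ≤ ‖H (wplus - wstar)‖ := by
    rcases eq_or_ne (wplus - wstar) 0 with h | h
    · simp [h]
    · have h1 := (hHb (wplus - wstar)).1
      have h2 : ⟪H (wplus - wstar), wplus - wstar⟫ ≤ ‖H (wplus - wstar)‖ * ‖wplus - wstar‖ :=
        real_inner_le_norm _ _
      have h3 : 0 < ‖wplus - wstar‖ := norm_pos_iff.2 h
      have h4 : μβ * ‖wplus - wstar‖ * ‖wplus - wstar‖ ≤ ‖H (wplus - wstar)‖ * ‖wplus - wstar‖ := by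
        calc μβ * ‖wplus - wstar‖ * ‖wplus - wstar‖ = μβ * ‖wplus - wstar‖ ^ 2 := by ring
          _ ≤ ⟪H (wplus - wstar), wplus - wstar⟫ := h1
          _ ≤ ‖H (wplus - wstar)‖ * ‖wplus - wstar‖ := h2
      exact le_of_mul_le_mul_right h4 h3
  have hζG : ζ * ‖gradient F w‖ ≤ ζ * (L * ‖w - wstar‖) :=
    mul_le_mul_of_nonneg_left hGL (le_of_lt hζ.1)
  have key : μβ * ‖wplus - wstar‖ ≤ M / 2 * ‖w - wstar‖ ^ 2
      + ‖H (w - wstar) - A w (w - wstar)‖ + ζ * L * ‖w - wstar‖ := by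
    nlinarith [hlow, hnorm, hζG, hTay]
  have hrw : M / (2 * μβ) * ‖w - wstar‖ ^ 2
      + 1 / μβ * ‖H (w - wstar) - A w (w - wstar)‖ + ζ * L / μβ * ‖w - wstar‖
      = (M / 2 * ‖w - wstar‖ ^ 2 + ‖H (w - wstar) - A w (w - wstar)‖
        + ζ * L * ‖w - wstar‖) / μβ := by
    field_simp
  rw [hrw, le_div_iff₀ hμβ]
  linarith [key]
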